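/- There exists an absolute constant C such that for every Lipschitz function f : ℝ → ℝ, ∫_ℝ N(f)(p)² dp ≤ C ∫_ℝ |f′(p)|² dp, where f′ is the (almost everywhere defined) derivative of f and N(f)(p) = sup_B (1/|B|) ∫_B |f(u) − m_B f| du / |B|, the supremum being taken over all closed intervals B of length |B| ≤ 4 containing p, and m_B f = (1/|B|) ∫_B f denoting the mean of f over B. -/

import Mathlib

open MeasureTheory Metric Set
open scoped ENNReal NNReal

/-- The mean value `m_{[a,b]} f = (1/(b-a)) ∫_a^b f`. -/
noncomputable def meanOn (f : ℝ → ℝ) (a b : ℝ) : ℝ :=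
  (1 / (b - a)) * ∫ u in Set.Icc a b, f u

/-- The maximal function
`N(f)(p) = sup_B (1/|B|) ∫_B |f − m_B f| / |B|`, the supremum over all closed intervals `B`
of length at most `4` containing `p`. -/
noncomputable def maxFnN (f : ℝ → ℝ) (p : ℝ) : ℝ :=
  ⨆ B : {q : ℝ × ℝ // q.1 ≤ q.2 ∧ q.2 - q.1 ≤ 4 ∧ p ∈ Set.Icc q.1 q.2},
    (1 / (B.1.2 - B.1.1)) *
      (∫ u in Set.Icc B.1.1 B.1.2, |f u - meanOn f B.1.1 B.1.2|) / (B.1.2 - B.1.1)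

lemma mono_ftc {g : ℝ → ℝ} (hg : Monotone g) {a b : ℝ} (hab : a ≤ b) :
    ∫ x in Set.Ioo a b, deriv g x ≤ g b - g a := by
  set μ := hg.stieltjesFunction.measure with hμ
  have hae : ∀ᵐ x, deriv g x = (μ.rnDeriv volume x).toReal := by
    filter_upwards [hg.ae_hasDerivAt] with x hx using hx.deriv.symm ▸ rfl
  have h1 : ∫ x in Set.Ioo a b, deriv g x
      = ∫ x in Set.Ioo a b, (μ.rnDeriv volume x).toReal := by
    apply integral_congr_ae (ae_restrict_of_ae ?_)
    filter_upwards [hae] with x hx using hx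
  have h2 : ∫ x in Set.Ioo a b, (μ.rnDeriv volume x).toReal
      = (∫⁻ x in Set.Ioo a b, μ.rnDeriv volume x).toReal := by
    apply integral_toReal ((μ.measurable_rnDeriv volume).aemeasurable)
    exact ae_restrict_of_ae (μ.rnDeriv_lt_top volume)
  have h3 : (∫⁻ x in Set.Ioo a b, μ.rnDeriv volume x) ≤ μ (Set.Ioo a b) := by
    have := Measure.withDensity_rnDeriv_le μ volume
    calc (∫⁻ x in Set.Ioo a b, μ.rnDeriv volume x)
        = (volume.withDensity (μ.rnDeriv volume)) (Set.Ioo a b) := by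
          rw [withDensity_apply _ measurableSet_Ioo]
      _ ≤ μ (Set.Ioo a b) := this _
  have h4 : μ (Set.Ioo a b) ≤ ENNReal.ofReal (g b - g a) := by
    rw [hμ, hg.stieltjesFunction.measure_Ioo]
    apply ENNReal.ofReal_le_ofReal
    have hbl : Function.leftLim hg.stieltjesFunction b ≤ g b := by
      apply le_of_tendsto (hg.stieltjesFunction.mono.tendsto_leftLim b)
      filter_upwards [self_mem_nhdsWithin] with y hy
      rw [hg.stieltjesFunction_eq]
      exact hg.rightLim_le hy
    have hal : g a ≤ hg.stieltjesFunction a := by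
      rw [hg.stieltjesFunction_eq]; exact hg.le_rightLim le_rfl
    linarith
  rw [h1, h2]
  calc (∫⁻ x in Set.Ioo a b, μ.rnDeriv volume x).toReal
      ≤ (ENNReal.ofReal (g b - g a)).toReal := by
        apply ENNReal.toReal_mono ENNReal.ofReal_ne_top (le_trans h3 h4)
    _ = g b - g a := ENNReal.toReal_ofReal (by linarith [hg hab])

lemma lip_deriv_bound {f : ℝ → ℝ} {K : ℝ≥0} (hf : LipschitzWith K f) (x : ℝ) :
    |deriv f x| ≤ K := by
  by_cases h : DifferentiableAt ℝ f x
  · have h1 : ‖fderiv ℝ f x‖ ≤ K := norm_fderiv_le_of_lipschitz ℝ hf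
    have h2 : deriv f x = fderiv ℝ f x 1 := rfl
    calc |deriv f x| = ‖fderiv ℝ f x 1‖ := by rw [h2]; rfl
      _ ≤ ‖fderiv ℝ f x‖ * ‖(1:ℝ)‖ := (fderiv ℝ f x).le_opNorm 1
      _ ≤ K := by simpa using h1
  · simp [deriv_zero_of_not_differentiableAt h, NNReal.coe_nonneg]



lemma deriv_integrableOn {f : ℝ → ℝ} {K : ℝ≥0} (hf : LipschitzWith K f) {s : Set ℝ}
    (hs : MeasurableSet s) (hs' : volume s ≠ ∞) :
    IntegrableOn (fun x => deriv f x) s := by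
  haveI : IsFiniteMeasure (volume.restrict s) :=
    ⟨by rwa [Measure.restrict_apply_univ, lt_top_iff_ne_top]⟩
  apply Integrable.mono' (integrable_const (K : ℝ))
    (measurable_deriv f).aestronglyMeasurable
  exact Filter.Eventually.of_forall fun x => by
    simpa [Real.norm_eq_abs] using lip_deriv_bound hf x

lemma lip_ftc {f : ℝ → ℝ} {K : ℝ≥0} (hf : LipschitzWith K f) {a b : ℝ} (hab : a ≤ b) :
    |f b - f a| ≤ ∫ x in Set.Icc a b, |deriv f x| := by
  have hd : IntegrableOn (fun x => deriv f x) (Set.Ioo a b) :=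
    deriv_integrableOn hf measurableSet_Ioo (by simp)
  have key : ∀ (c : ℝ), (∀ x y, x ≤ y → c * (f y - f x) ≤ (K:ℝ) * (y - x)) → c = 1 ∨ c = -1 →
      c * (f b - f a) ≤ ∫ x in Set.Ioo a b, c * deriv f x := by
    intro c hc hc1
    set g : ℝ → ℝ := fun x => (K : ℝ) * x - c * f x with hg
    have hgm : Monotone g := by
      intro x y hxy
      have := hc x y hxy
      simp only [hg]
      nlinarith
    have hgd : ∀ᵐ x, deriv g x = (K : ℝ) - c * deriv f x := by
      filter_upwards [hf.ae_differentiableAt] with x hx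
      have h1 : HasDerivAt (fun y => (K:ℝ) * y) (K:ℝ) x := by
        simpa using (hasDerivAt_id x).const_mul (K:ℝ)
      have h2 : HasDerivAt g ((K:ℝ) - c * deriv f x) x :=
        h1.sub ((hx.hasDerivAt.const_mul c))
      exact h2.deriv
    have := mono_ftc hgm hab
    have heq : ∫ x in Set.Ioo a b, deriv g x
        = ∫ x in Set.Ioo a b, ((K:ℝ) - c * deriv f x) := by
      exact integral_congr_ae (ae_restrict_of_ae hgd)
    have hsub : ∫ x in Set.Ioo a b, ((K:ℝ) - c * deriv f x)
        = (K:ℝ) * (b - a) - c * ∫ x in Set.Ioo a b, deriv f x := by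
      rw [integral_sub (integrable_const _) (hd.const_mul c), integral_const,
        integral_const_mul]
      simp [Real.volume_Ioo, ENNReal.toReal_ofReal (by linarith : (0:ℝ) ≤ b - a), max_eq_left (by linarith : (0:ℝ) ≤ b - a), smul_eq_mul, mul_comm]
    rw [heq, hsub] at this
    have hgval : g b - g a = (K:ℝ) * (b-a) - c * (f b - f a) := by simp [hg]; ring
    rw [hgval] at this
    rw [integral_const_mul]
    linarith
  have h1 : f b - f a ≤ ∫ x in Set.Ioo a b, deriv f x := by
    have := key 1 (fun x y hxy => by
      simpa using (by
        have := hf.dist_le_mul y x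
        rw [Real.dist_eq, Real.dist_eq] at this
        have h2 := abs_le.1 this
        have h3 : |y - x| = y - x := abs_of_nonneg (by linarith)
        rw [h3] at this
        nlinarith [abs_le.1 this] : f y - f x ≤ (K:ℝ) * (y - x))) (Or.inl rfl)
    simpa using this
  have h2 : -(f b - f a) ≤ -∫ x in Set.Ioo a b, deriv f x := by
    have := key (-1) (fun x y hxy => by
      have := hf.dist_le_mul y x
      rw [Real.dist_eq, Real.dist_eq] at this
      have h3 : |y - x| = y - x := abs_of_nonneg (by linarith)
      rw [h3] at this
      nlinarith [abs_le.1 this]) (Or.inr rfl)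
    have he : ∫ x in Set.Ioo a b, (-1 : ℝ) * deriv f x
        = -∫ x in Set.Ioo a b, deriv f x := by
      rw [integral_const_mul]; ring
    rw [he] at this
    linarith
  have h3 : |f b - f a| ≤ |∫ x in Set.Ioo a b, deriv f x| := by
    rw [abs_le]
    constructor
    · have := abs_le.1 (le_refl |∫ x in Set.Ioo a b, deriv f x|)
      nlinarith [neg_abs_le (∫ x in Set.Ioo a b, deriv f x), h2]
    · nlinarith [le_abs_self (∫ x in Set.Ioo a b, deriv f x), h1]
  calc |f b - f a| ≤ |∫ x in Set.Ioo a b, deriv f x| := h3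
    _ ≤ ∫ x in Set.Ioo a b, |deriv f x| := by
        simpa [Real.norm_eq_abs] using
          norm_integral_le_integral_norm (μ := volume.restrict (Set.Ioo a b))
            (fun x => deriv f x)
    _ = ∫ x in Set.Icc a b, |deriv f x| := (integral_Icc_eq_integral_Ioo).symm




lemma term_le {f : ℝ → ℝ} {K : ℝ≥0} (hf : LipschitzWith K f) {a b : ℝ} (hab : a < b) :
    (1 / (b - a)) * (∫ u in Set.Icc a b, |f u - meanOn f a b|) / (b - a)
      ≤ (∫ x in Set.Icc a b, |deriv f x|) / (b - a) := by
  have hfc : Continuous f := hf.continuous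
  set I := ∫ x in Set.Icc a b, |deriv f x| with hI
  have hIint : IntegrableOn (fun x => |deriv f x|) (Set.Icc a b) :=
    (deriv_integrableOn hf measurableSet_Icc (by simp)).abs
  have hI0 : 0 ≤ I := by
    apply setIntegral_nonneg measurableSet_Icc
    intro x _; exact abs_nonneg _
  have hfi : IntegrableOn f (Set.Icc a b) := hfc.integrableOn_Icc
  have hvol : (volume (Set.Icc a b)).toReal = b - a := by
    simp [Real.volume_Icc, ENNReal.toReal_ofReal (by linarith : (0:ℝ) ≤ b - a)]
  have step1 : ∀ u ∈ Set.Icc a b, ∀ v ∈ Set.Icc a b, |f u - f v| ≤ I := by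
    intro u hu v hv
    rcases le_total v u with h | h
    · calc |f u - f v| ≤ ∫ x in Set.Icc v u, |deriv f x| := lip_ftc hf h
        _ ≤ I := by
          apply setIntegral_mono_set hIint
          · exact Filter.Eventually.of_forall fun x => abs_nonneg _
          · exact HasSubset.Subset.eventuallyLE (Set.Icc_subset_Icc hv.1 hu.2)
    · calc |f u - f v| = |f v - f u| := abs_sub_comm _ _
        _ ≤ ∫ x in Set.Icc u v, |deriv f x| := lip_ftc hf h
        _ ≤ I := by
          apply setIntegral_mono_set hIint
          · exact Filter.Eventually.of_forall fun x => abs_nonneg _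
          · exact HasSubset.Subset.eventuallyLE (Set.Icc_subset_Icc hu.1 hv.2)
  have hba : (0:ℝ) < b - a := by linarith
  have step2 : ∀ u ∈ Set.Icc a b, |f u - meanOn f a b| ≤ I := by
    intro u hu
    have h1 : f u - meanOn f a b
        = (1 / (b - a)) * ∫ v in Set.Icc a b, (f u - f v) := by
      rw [integral_sub (integrable_const _) hfi, integral_const, measureReal_restrict_apply_univ, measureReal_def, hvol, meanOn, smul_eq_mul]
      field_simp [hba.ne']
    have h2 : |∫ v in Set.Icc a b, (f u - f v)| ≤ ∫ v in Set.Icc a b, |f u - f v| := by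
      simpa [Real.norm_eq_abs] using
        norm_integral_le_integral_norm (μ := volume.restrict (Set.Icc a b))
          (fun v => f u - f v)
    have h3 : ∫ v in Set.Icc a b, |f u - f v| ≤ ∫ v in Set.Icc a b, I := by
      apply setIntegral_mono_on
      · exact ((continuous_const.sub hfc).abs).integrableOn_Icc
      · exact integrableOn_const (by simp [Real.volume_Icc])
      · exact measurableSet_Icc
      · intro v hv; exact step1 u hu v hv
    have h4 : ∫ v in Set.Icc a b, I = (b - a) * I := by
      rw [integral_const, measureReal_restrict_apply_univ, measureReal_def, hvol, smul_eq_mul]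
    rw [h1, abs_mul]
    calc |1 / (b - a)| * |∫ v in Set.Icc a b, (f u - f v)|
        ≤ (1 / (b - a)) * ((b - a) * I) := by
          rw [abs_of_nonneg (by positivity : (0:ℝ) ≤ 1 / (b - a))]
          apply mul_le_mul_of_nonneg_left _ (by positivity)
          exact le_trans h2 (le_trans h3 (le_of_eq h4))
      _ = I := by field_simp
  have step3 : ∫ u in Set.Icc a b, |f u - meanOn f a b| ≤ (b - a) * I := by
    calc ∫ u in Set.Icc a b, |f u - meanOn f a b| ≤ ∫ u in Set.Icc a b, I := by
          apply setIntegral_mono_on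
          · exact ((hfc.sub continuous_const).abs).integrableOn_Icc
          · exact integrableOn_const (by simp [Real.volume_Icc])
          · exact measurableSet_Icc
          · intro u hu; exact step2 u hu
      _ = (b - a) * I := by rw [integral_const, measureReal_restrict_apply_univ, measureReal_def, hvol, smul_eq_mul]
  have hnn : 0 ≤ ∫ u in Set.Icc a b, |f u - meanOn f a b| :=
    setIntegral_nonneg measurableSet_Icc (fun x _ => abs_nonneg _)
  calc (1 / (b - a)) * (∫ u in Set.Icc a b, |f u - meanOn f a b|) / (b - a)
      ≤ (1 / (b - a)) * ((b - a) * I) / (b - a) := by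
        gcongr
    _ = I / (b - a) := by field_simp

noncomputable def sMax (D : ℝ → ℝ≥0∞) (p : ℝ) : ℝ≥0∞ :=
  ⨆ q : ℚ × ℚ, (Set.Icc (q.1 : ℝ) (q.2 : ℝ)).indicator
    (fun _ => if (q.2 : ℝ) - (q.1 : ℝ) ≤ 13 then
        3 * ((∫⁻ x in Set.Icc (q.1 : ℝ) (q.2 : ℝ), D x) / ENNReal.ofReal ((q.2 : ℝ) - (q.1 : ℝ)))
      else 0) p

lemma sMax_measurable (D : ℝ → ℝ≥0∞) : Measurable (sMax D) := by
  apply Measurable.iSup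
  intro q
  exact measurable_const.indicator measurableSet_Icc

lemma avg_le {D : ℝ → ℝ≥0∞} {c : ℝ≥0∞} (hD : ∀ x, D x ≤ c) (a b : ℝ) :
    (∫⁻ x in Set.Icc a b, D x) / ENNReal.ofReal (b - a) ≤ c := by
  rcases le_or_gt b a with h | h
  · have : (∫⁻ x in Set.Icc a b, D x) = 0 := by
      rcases lt_or_eq_of_le h with h' | h'
      · simp [Set.Icc_eq_empty (not_le.2 h')]
      · subst h'
        rw [Set.Icc_self]
        exact setLIntegral_measure_zero _ _ (by simp)
    simp [this]
  · have h1 : (∫⁻ x in Set.Icc a b, D x) ≤ c * ENNReal.ofReal (b - a) := by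
      calc (∫⁻ x in Set.Icc a b, D x) ≤ ∫⁻ _ in Set.Icc a b, c := by
            exact lintegral_mono fun x => hD x
        _ = c * ENNReal.ofReal (b - a) := by
            rw [setLIntegral_const, Real.volume_Icc]
    calc (∫⁻ x in Set.Icc a b, D x) / ENNReal.ofReal (b - a)
        ≤ c * ENNReal.ofReal (b - a) / ENNReal.ofReal (b - a) := by gcongr
      _ = c * (ENNReal.ofReal (b - a) / ENNReal.ofReal (b - a)) := by
          rw [mul_div_assoc]
      _ ≤ c * 1 := mul_le_mul_right ENNReal.div_self_le_one c
      _ = c := mul_one c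

lemma sMax_le {D : ℝ → ℝ≥0∞} {c : ℝ≥0∞} (hD : ∀ x, D x ≤ c) (p : ℝ) :
    sMax D p ≤ 3 * c := by
  apply iSup_le
  intro q
  apply Set.indicator_le' (fun x _ => ?_) (fun x _ => zero_le) p
  split_ifs
  · exact mul_le_mul_right (avg_le hD _ _) 3
  · exact zero_le


lemma icc_eq_cb (u v : ℝ) (h : u ≤ v) :
    Set.Icc u v = closedBall ((u + v) / 2) ((v - u) / 2) := by
  have h1 : (u + v) / 2 - (v - u) / 2 = u := by ring
  have h2 : (u + v) / 2 + (v - u) / 2 = v := by ring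
  rw [Real.closedBall_eq_Icc, h1, h2]

lemma sMax_weak {D : ℝ → ℝ≥0∞} (hDm : Measurable D) {c : ℝ}
    (hDb : ∀ x, D x ≤ ENNReal.ofReal c) {lam : ℝ} (hlam : 0 < lam) :
    volume {p | 3 * ENNReal.ofReal lam < sMax D p}
      ≤ 4 * (ENNReal.ofReal lam / 2)⁻¹ *
          ∫⁻ x, ({y | ENNReal.ofReal lam < 6 * D y}.indicator D) x := by
  set ol := ENNReal.ofReal lam with hol
  have hol0 : ol ≠ 0 := by simp [hol, hlam, ENNReal.ofReal_pos.2 hlam] 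
  have holtop : ol ≠ ∞ := ENNReal.ofReal_ne_top
  set G : ℝ → ℝ≥0∞ := {y | ol < 6 * D y}.indicator D with hG
  have hGm : Measurable G := by
    apply hDm.indicator
    exact measurableSet_lt measurable_const (measurable_const.mul hDm)
  have hGle : ∀ x, G x ≤ D x := fun x => Set.indicator_le_self _ _ x
  have hDle : ∀ x, D x ≤ G x + ol / 6 := by
    intro x
    by_cases h : ol < 6 * D x
    · rw [hG, Set.indicator_of_mem (show x ∈ {y | ol < 6 * D y} from h) D]
      exact le_self_add
    · push_neg at h
      have : D x ≤ ol / 6 := by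
        rw [ENNReal.le_div_iff_mul_le (Or.inl (by norm_num)) (Or.inl (by norm_num))]
        rw [mul_comm]; exact h
      exact le_add_left this
  -- the family of "bad" rational intervals
  set S : Set (ℚ × ℚ) := {q | (q.1 : ℝ) ≤ (q.2 : ℝ) ∧ (q.2 : ℝ) - (q.1 : ℝ) ≤ 13 ∧
    ol / 2 < (∫⁻ x in Set.Icc (q.1 : ℝ) (q.2 : ℝ), G x) / ENNReal.ofReal ((q.2 : ℝ) - (q.1 : ℝ))}
    with hS
  -- covering property
  have cover : {p | 3 * ol < sMax D p} ⊆ ⋃ q ∈ S, Set.Icc (q.1 : ℝ) (q.2 : ℝ) := by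
    intro p hp
    simp only [Set.mem_setOf_eq, sMax, lt_iSup_iff] at hp
    obtain ⟨q, hq⟩ := hp
    have hmem : p ∈ Set.Icc (q.1 : ℝ) (q.2 : ℝ) := by
      by_contra hmem
      rw [Set.indicator_of_notMem hmem] at hq
      exact (not_lt_of_ge zero_le) hq
    rw [Set.indicator_of_mem hmem] at hq
    have h13 : (q.2 : ℝ) - (q.1 : ℝ) ≤ 13 := by
      by_contra h13
      rw [if_neg h13] at hq
      exact absurd hq (not_lt_of_ge zero_le)
    have hq' : 3 * ol < 3 * ((∫⁻ x in Set.Icc (q.1 : ℝ) (q.2 : ℝ), D x)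
        / ENNReal.ofReal ((q.2 : ℝ) - (q.1 : ℝ))) := by rwa [if_pos h13] at hq
    have havgD : ol < (∫⁻ x in Set.Icc (q.1 : ℝ) (q.2 : ℝ), D x)
        / ENNReal.ofReal ((q.2 : ℝ) - (q.1 : ℝ)) :=
      (ENNReal.mul_lt_mul_iff_right (by norm_num) (by norm_num)).1 hq'
    have hq12 : (q.1 : ℝ) ≤ (q.2 : ℝ) := le_trans hmem.1 hmem.2
    -- avg of D is at most avg of G + ol/6
    have havg : (∫⁻ x in Set.Icc (q.1 : ℝ) (q.2 : ℝ), D x)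
        / ENNReal.ofReal ((q.2 : ℝ) - (q.1 : ℝ))
        ≤ (∫⁻ x in Set.Icc (q.1 : ℝ) (q.2 : ℝ), G x)
          / ENNReal.ofReal ((q.2 : ℝ) - (q.1 : ℝ)) + ol / 6 := by
      have h1 : (∫⁻ x in Set.Icc (q.1 : ℝ) (q.2 : ℝ), D x)
          ≤ (∫⁻ x in Set.Icc (q.1 : ℝ) (q.2 : ℝ), G x)
            + ol / 6 * ENNReal.ofReal ((q.2 : ℝ) - (q.1 : ℝ)) := by
        calc (∫⁻ x in Set.Icc (q.1 : ℝ) (q.2 : ℝ), D x)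
            ≤ ∫⁻ x in Set.Icc (q.1 : ℝ) (q.2 : ℝ), (G x + ol / 6) :=
              lintegral_mono fun x => hDle x
          _ = (∫⁻ x in Set.Icc (q.1 : ℝ) (q.2 : ℝ), G x)
              + ol / 6 * ENNReal.ofReal ((q.2 : ℝ) - (q.1 : ℝ)) := by
              rw [lintegral_add_right _ measurable_const, setLIntegral_const,
                Real.volume_Icc]
      calc (∫⁻ x in Set.Icc (q.1 : ℝ) (q.2 : ℝ), D x)
          / ENNReal.ofReal ((q.2 : ℝ) - (q.1 : ℝ))
          ≤ ((∫⁻ x in Set.Icc (q.1 : ℝ) (q.2 : ℝ), G x)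
              + ol / 6 * ENNReal.ofReal ((q.2 : ℝ) - (q.1 : ℝ)))
            / ENNReal.ofReal ((q.2 : ℝ) - (q.1 : ℝ)) := by gcongr
        _ = (∫⁻ x in Set.Icc (q.1 : ℝ) (q.2 : ℝ), G x)
              / ENNReal.ofReal ((q.2 : ℝ) - (q.1 : ℝ))
            + ol / 6 * ENNReal.ofReal ((q.2 : ℝ) - (q.1 : ℝ))
              / ENNReal.ofReal ((q.2 : ℝ) - (q.1 : ℝ)) := by
            rw [ENNReal.add_div]
        _ ≤ (∫⁻ x in Set.Icc (q.1 : ℝ) (q.2 : ℝ), G x)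
              / ENNReal.ofReal ((q.2 : ℝ) - (q.1 : ℝ)) + ol / 6 := by
            apply add_le_add le_rfl
            rw [mul_div_assoc]
            calc ol / 6 * (ENNReal.ofReal ((q.2 : ℝ) - (q.1 : ℝ))
                / ENNReal.ofReal ((q.2 : ℝ) - (q.1 : ℝ))) ≤ ol / 6 * 1 :=
                mul_le_mul_right ENNReal.div_self_le_one _
              _ = ol / 6 := mul_one _
    -- conclude avg G > ol/2
    have hS' : ol / 2 < (∫⁻ x in Set.Icc (q.1 : ℝ) (q.2 : ℝ), G x)
        / ENNReal.ofReal ((q.2 : ℝ) - (q.1 : ℝ)) := by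
      by_contra hcon
      push_neg at hcon
      have : ol < ol / 2 + ol / 6 := lt_of_lt_of_le havgD (le_trans havg (by gcongr))
      have h2 : ol / 2 = ENNReal.ofReal (lam / 2) := by
        rw [hol, ENNReal.ofReal_div_of_pos (by norm_num)]; norm_num
      have h6 : ol / 6 = ENNReal.ofReal (lam / 6) := by
        rw [hol, ENNReal.ofReal_div_of_pos (by norm_num)]; norm_num
      rw [h2, h6, ← ENNReal.ofReal_add (by positivity) (by positivity), hol] at this
      rw [ENNReal.ofReal_lt_ofReal_iff (by positivity)] at this
      linarith
    exact Set.mem_biUnion (show q ∈ S from ⟨hq12, h13, hS'⟩) hmem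
  -- volume bound for each bad interval
  have volS : ∀ q ∈ S, volume (Set.Icc (q.1 : ℝ) (q.2 : ℝ))
      ≤ (ol / 2)⁻¹ * ∫⁻ x in Set.Icc (q.1 : ℝ) (q.2 : ℝ), G x := by
    rintro q ⟨hq12, hq13, hqavg⟩
    rcases eq_or_lt_of_le hq12 with h | h
    · rw [← h] at hqavg ⊢
      simp only [sub_self, ENNReal.ofReal_zero] at hqavg
      rw [Set.Icc_self] at hqavg ⊢
      rw [setLIntegral_measure_zero _ _ (by simp : volume ({(q.1 : ℝ)} : Set ℝ) = 0)]
        at hqavg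
      simp at hqavg
    · have hlen0 : ENNReal.ofReal ((q.2 : ℝ) - (q.1 : ℝ)) ≠ 0 := by
        simp only [ne_eq, ENNReal.ofReal_eq_zero, not_le]; linarith
      have hmul : ol / 2 * ENNReal.ofReal ((q.2 : ℝ) - (q.1 : ℝ))
          < ∫⁻ x in Set.Icc (q.1 : ℝ) (q.2 : ℝ), G x := by
        rwa [← ENNReal.lt_div_iff_mul_lt (Or.inl hlen0) (Or.inl ENNReal.ofReal_ne_top)]
      have hol2 : ol / 2 ≠ 0 := by
        simp [ENNReal.div_eq_zero_iff, hol0]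
      have hol2top : ol / 2 ≠ ∞ := by
        simp [ENNReal.div_eq_top, holtop]
      calc volume (Set.Icc (q.1 : ℝ) (q.2 : ℝ)) = ENNReal.ofReal ((q.2 : ℝ) - (q.1 : ℝ)) := by
            rw [Real.volume_Icc]
        _ = (ol / 2)⁻¹ * (ol / 2 * ENNReal.ofReal ((q.2 : ℝ) - (q.1 : ℝ))) := by
            rw [← mul_assoc, ENNReal.inv_mul_cancel hol2 hol2top, one_mul]
        _ ≤ (ol / 2)⁻¹ * ∫⁻ x in Set.Icc (q.1 : ℝ) (q.2 : ℝ), G x := by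
            exact mul_le_mul_right hmul.le _
  -- Vitali covering
  obtain ⟨u, huS, hdisj, hcov⟩ :=
    Vitali.exists_disjoint_subfamily_covering_enlargement_closedBall S
      (fun q : ℚ × ℚ => (((q.1 : ℝ) + (q.2 : ℝ)) / 2))
      (fun q : ℚ × ℚ => (((q.2 : ℝ) - (q.1 : ℝ)) / 2)) 7
      (fun q hq => by
        have := hq.2.1
        linarith) 4 (by norm_num)
  haveI : Countable ↥u := (Set.to_countable u).to_subtype
  have hdisj' : Pairwise (Function.onFun Disjoint
      (fun b : ↥u => Set.Icc (((b : ℚ × ℚ).1 : ℝ)) (((b : ℚ × ℚ).2 : ℝ)))) := by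
    intro i j hij
    have hne : (i : ℚ × ℚ) ≠ (j : ℚ × ℚ) := fun h => hij (Subtype.ext h)
    have hd := hdisj i.2 j.2 hne
    rw [Function.onFun] at hd ⊢
    rwa [icc_eq_cb _ _ (huS i.2).1, icc_eq_cb _ _ (huS j.2).1]
  have hsum : ∑' b : ↥u, ∫⁻ x in Set.Icc (((b : ℚ × ℚ).1 : ℝ)) (((b : ℚ × ℚ).2 : ℝ)), G x
      ≤ ∫⁻ x, G x := by
    rw [← lintegral_iUnion (fun _ => measurableSet_Icc) hdisj' G]
    calc ∫⁻ x in ⋃ b : ↥u, Set.Icc (((b : ℚ × ℚ).1 : ℝ)) (((b : ℚ × ℚ).2 : ℝ)), G x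
        ≤ ∫⁻ x in (Set.univ : Set ℝ), G x := lintegral_mono_set (Set.subset_univ _)
      _ = ∫⁻ x, G x := by rw [setLIntegral_univ]
  calc volume {p | 3 * ol < sMax D p}
      ≤ volume (⋃ b ∈ u, closedBall ((((b : ℚ × ℚ).1 : ℝ) + ((b : ℚ × ℚ).2 : ℝ)) / 2)
          (4 * ((((b : ℚ × ℚ).2 : ℝ) - ((b : ℚ × ℚ).1 : ℝ)) / 2))) := by
        apply measure_mono
        refine cover.trans ?_
        intro p hp
        rw [Set.mem_iUnion₂] at hp
        obtain ⟨q, hqS, hpq⟩ := hp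
        obtain ⟨b, hbu, hsub⟩ := hcov q hqS
        rw [Set.mem_iUnion₂]
        refine ⟨b, hbu, hsub ?_⟩
        rwa [← icc_eq_cb _ _ (hqS.1)]
    _ ≤ ∑' b : ↥u, volume (closedBall ((((b : ℚ × ℚ).1 : ℝ) + ((b : ℚ × ℚ).2 : ℝ)) / 2)
          (4 * ((((b : ℚ × ℚ).2 : ℝ) - ((b : ℚ × ℚ).1 : ℝ)) / 2))) :=
        measure_biUnion_le _ (Set.to_countable u) _
    _ ≤ ∑' b : ↥u, 4 * ((ol / 2)⁻¹
          * ∫⁻ x in Set.Icc (((b : ℚ × ℚ).1 : ℝ)) (((b : ℚ × ℚ).2 : ℝ)), G x) := by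
        apply ENNReal.tsum_le_tsum
        intro b
        have hb : (b : ℚ × ℚ) ∈ S := huS b.2
        have hr0 : (0:ℝ) ≤ (((b : ℚ × ℚ).2 : ℝ) - ((b : ℚ × ℚ).1 : ℝ)) := by
          have := hb.1; linarith
        calc volume (closedBall ((((b : ℚ × ℚ).1 : ℝ) + ((b : ℚ × ℚ).2 : ℝ)) / 2)
              (4 * ((((b : ℚ × ℚ).2 : ℝ) - ((b : ℚ × ℚ).1 : ℝ)) / 2)))
            = ENNReal.ofReal (4 * ((((b : ℚ × ℚ).2 : ℝ) - ((b : ℚ × ℚ).1 : ℝ)))) := by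
              rw [Real.volume_closedBall]
              congr 1
              ring
          _ = 4 * ENNReal.ofReal ((((b : ℚ × ℚ).2 : ℝ) - ((b : ℚ × ℚ).1 : ℝ))) := by
              rw [ENNReal.ofReal_mul (by norm_num)]
              norm_num
          _ = 4 * volume (Set.Icc (((b : ℚ × ℚ).1 : ℝ)) (((b : ℚ × ℚ).2 : ℝ))) := by
              rw [Real.volume_Icc]
          _ ≤ 4 * ((ol / 2)⁻¹
              * ∫⁻ x in Set.Icc (((b : ℚ × ℚ).1 : ℝ)) (((b : ℚ × ℚ).2 : ℝ)), G x) :=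
              mul_le_mul_right (volS _ hb) 4
    _ = 4 * (ol / 2)⁻¹ * ∑' b : ↥u, ∫⁻ x in Set.Icc (((b : ℚ × ℚ).1 : ℝ))
          (((b : ℚ × ℚ).2 : ℝ)), G x := by
        rw [ENNReal.tsum_mul_left, ENNReal.tsum_mul_left, mul_assoc]
    _ ≤ 4 * (ol / 2)⁻¹ * ∫⁻ x, G x := mul_le_mul_right hsum _








lemma maxFnN_nonneg (f : ℝ → ℝ) (p : ℝ) : 0 ≤ maxFnN f p := by
  apply Real.iSup_nonneg
  rintro ⟨⟨a, b⟩, hab, -, -⟩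
  dsimp only at hab ⊢
  have h1 : (0:ℝ) ≤ 1 / (b - a) := div_nonneg zero_le_one (by linarith)
  have h2 : (0:ℝ) ≤ ∫ u in Set.Icc a b, |f u - meanOn f a b| :=
    setIntegral_nonneg measurableSet_Icc (fun x _ => abs_nonneg _)
  exact div_nonneg (mul_nonneg h1 h2) (by linarith)

lemma maxFnN_le_sMax {f : ℝ → ℝ} {K : ℝ≥0} (hf : LipschitzWith K f) (p : ℝ) :
    maxFnN f p ≤ (sMax (fun x => ENNReal.ofReal |deriv f x|) p).toReal := by
  set D : ℝ → ℝ≥0∞ := fun x => ENNReal.ofReal |deriv f x| with hD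
  have hDb : ∀ x, D x ≤ ENNReal.ofReal K := fun x =>
    ENNReal.ofReal_le_ofReal (lip_deriv_bound hf x)
  have hfin : sMax D p ≠ ∞ :=
    ne_top_of_le_ne_top (by finiteness) (sMax_le hDb p)
  haveI : Nonempty {q : ℝ × ℝ // q.1 ≤ q.2 ∧ q.2 - q.1 ≤ 4 ∧ p ∈ Set.Icc q.1 q.2} :=
    ⟨⟨(p, p), le_rfl, by norm_num, by simp⟩⟩
  apply ciSup_le
  rintro ⟨⟨a, b⟩, hab, hlen, hp⟩
  dsimp only at hab hlen hp ⊢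
  rcases eq_or_lt_of_le hab with h | h
  · rw [← h, sub_self]
    simp
  · -- a < b
    have hba : (0:ℝ) < b - a := by linarith
    set I := ∫ x in Set.Icc a b, |deriv f x| with hI
    have hI0 : 0 ≤ I := setIntegral_nonneg measurableSet_Icc (fun x _ => abs_nonneg _)
    obtain ⟨qa, hqa1, hqa2⟩ := exists_rat_btwn (show a - (b - a) < a by linarith)
    obtain ⟨qb, hqb1, hqb2⟩ := exists_rat_btwn (show b < b + (b - a) by linarith)
    have hqle : (qa : ℝ) ≤ (qb : ℝ) := by linarith
    have hq13 : (qb : ℝ) - (qa : ℝ) ≤ 13 := by linarith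
    have hpmem : p ∈ Set.Icc (qa : ℝ) (qb : ℝ) :=
      ⟨by linarith [hp.1], by linarith [hp.2]⟩
    have key : ENNReal.ofReal (I / (b - a)) ≤ sMax D p := by
      have h1 : ENNReal.ofReal (I / (b - a)) = ENNReal.ofReal I / ENNReal.ofReal (b - a) :=
        ENNReal.ofReal_div_of_pos hba
      have h2 : ENNReal.ofReal I ≤ ∫⁻ x in Set.Icc a b, D x := by
        rw [hI]
        rw [ofReal_integral_eq_lintegral_ofReal
          (deriv_integrableOn hf measurableSet_Icc (by simp)).abs
          (ae_of_all _ fun x => abs_nonneg _)]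
      have h3 : (∫⁻ x in Set.Icc a b, D x) ≤ ∫⁻ x in Set.Icc (qa:ℝ) (qb:ℝ), D x :=
        lintegral_mono_set (Set.Icc_subset_Icc (by linarith) (by linarith))
      set X := ∫⁻ x in Set.Icc (qa:ℝ) (qb:ℝ), D x with hX
      have h4 : ENNReal.ofReal I / ENNReal.ofReal (b - a) ≤ X / ENNReal.ofReal (b - a) := by
        gcongr
        exact le_trans h2 h3
      have h5 : X / ENNReal.ofReal (b - a) = 3 * (X / (3 * ENNReal.ofReal (b - a))) := by
        rw [ENNReal.div_eq_inv_mul, ENNReal.div_eq_inv_mul, ENNReal.mul_inv (by norm_num)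
          (by norm_num)]
        rw [← mul_assoc, ← mul_assoc, ENNReal.mul_inv_cancel (by norm_num) (by norm_num),
          one_mul]
      have h6 : 3 * ENNReal.ofReal (b - a) = ENNReal.ofReal (3 * (b - a)) := by
        rw [ENNReal.ofReal_mul (by norm_num)]
        norm_num
      have h7 : X / (3 * ENNReal.ofReal (b - a)) ≤ X / ENNReal.ofReal ((qb:ℝ) - (qa:ℝ)) := by
        apply ENNReal.div_le_div_left
        rw [h6]
        exact ENNReal.ofReal_le_ofReal (by linarith)
      have h8 : 3 * (X / ENNReal.ofReal ((qb:ℝ) - (qa:ℝ))) ≤ sMax D p := by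
        rw [sMax]
        have h9 := le_iSup (fun q : ℚ × ℚ => (Set.Icc (q.1 : ℝ) (q.2 : ℝ)).indicator
            (fun _ => if (q.2 : ℝ) - (q.1 : ℝ) ≤ 13 then
              3 * ((∫⁻ x in Set.Icc (q.1 : ℝ) (q.2 : ℝ), D x)
                / ENNReal.ofReal ((q.2 : ℝ) - (q.1 : ℝ)))
            else 0) p) (qa, qb)
        dsimp only at h9
        rw [Set.indicator_of_mem hpmem, if_pos hq13] at h9
        exact h9
      calc ENNReal.ofReal (I / (b - a)) = ENNReal.ofReal I / ENNReal.ofReal (b - a) := h1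
        _ ≤ X / ENNReal.ofReal (b - a) := h4
        _ = 3 * (X / (3 * ENNReal.ofReal (b - a))) := h5
        _ ≤ 3 * (X / ENNReal.ofReal ((qb:ℝ) - (qa:ℝ))) := mul_le_mul_right h7 3
        _ ≤ sMax D p := h8
    have final : I / (b - a) ≤ (sMax D p).toReal :=
      (ENNReal.ofReal_le_iff_le_toReal hfin).1 key
    exact le_trans (term_le hf h) final










theorem statement13 :
    ∃ C : ℝ, 0 < C ∧
      ∀ f : ℝ → ℝ, (∃ K : ℝ≥0, LipschitzWith K f) →
        (∫⁻ p, ENNReal.ofReal (maxFnN f p ^ 2)) ≤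
          ENNReal.ofReal C * ∫⁻ p, ENNReal.ofReal (deriv f p ^ 2) := by
  refine ⟨864, by norm_num, ?_⟩
  rintro f ⟨K, hf⟩
  set D : ℝ → ℝ≥0∞ := fun x => ENNReal.ofReal |deriv f x| with hD
  have hDm : Measurable D := (measurable_deriv f).abs.ennreal_ofReal
  have hDb : ∀ x, D x ≤ ENNReal.ofReal K := fun x =>
    ENNReal.ofReal_le_ofReal (lip_deriv_bound hf x)
  have hDtop : ∀ x, 6 * D x ≠ ∞ := fun x =>
    ENNReal.mul_ne_top (by norm_num) (ne_top_of_le_ne_top ENNReal.ofReal_ne_top (hDb x))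
  set Mr : ℝ → ℝ := fun p => (sMax D p).toReal with hMr
  have hMrm : Measurable Mr := (sMax_measurable D).ennreal_toReal
  have hMr0 : ∀ p, 0 ≤ Mr p := fun p => ENNReal.toReal_nonneg
  have hfin : ∀ p, sMax D p ≠ ∞ := fun p =>
    ne_top_of_le_ne_top (by finiteness) (sMax_le hDb p)
  -- pointwise comparison
  have hpt : ∀ p, ENNReal.ofReal (maxFnN f p ^ 2) ≤ ENNReal.ofReal (Mr p ^ 2) := by
    intro p
    apply ENNReal.ofReal_le_ofReal
    have h1 := maxFnN_le_sMax hf p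
    have h2 := maxFnN_nonneg f p
    nlinarith
  -- layer cake for Mr
  have hlc : ∫⁻ p, ENNReal.ofReal (Mr p ^ (2:ℝ)) =
      ENNReal.ofReal 2 * ∫⁻ t in Set.Ioi (0:ℝ),
        volume {a | t < Mr a} * ENNReal.ofReal (t ^ ((2:ℝ) - 1)) :=
    lintegral_rpow_eq_lintegral_meas_lt_mul volume (ae_of_all _ hMr0)
      hMrm.aemeasurable (by norm_num)
  -- bound the layer cake integrand
  have hbound : ∀ t : ℝ, 0 < t →
      volume {a | t < Mr a} * ENNReal.ofReal t
        ≤ 24 * ∫⁻ x, ({y | ENNReal.ofReal (t/3) < 6 * D y}.indicator D) x := by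
    intro t ht
    have hset : {a | t < Mr a} = {p | 3 * ENNReal.ofReal (t/3) < sMax D p} := by
      ext a
      simp only [Set.mem_setOf_eq, hMr]
      rw [← ENNReal.ofReal_lt_iff_lt_toReal ht.le (hfin a)]
      have h3 : 3 * ENNReal.ofReal (t/3) = ENNReal.ofReal t := by
        rw [show (3:ℝ≥0∞) = ENNReal.ofReal 3 by norm_num,
          ← ENNReal.ofReal_mul (by norm_num)]
        congr 1
        ring
      rw [h3]
    have hw := sMax_weak hDm hDb (show (0:ℝ) < t/3 by linarith)
    rw [hset]
    calc volume {p | 3 * ENNReal.ofReal (t/3) < sMax D p} * ENNReal.ofReal t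
        ≤ (4 * (ENNReal.ofReal (t/3) / 2)⁻¹ *
            ∫⁻ x, ({y | ENNReal.ofReal (t/3) < 6 * D y}.indicator D) x) * ENNReal.ofReal t :=
          mul_le_mul_left hw _
      _ = (4 * ((ENNReal.ofReal (t/3) / 2)⁻¹ * ENNReal.ofReal t)) *
            ∫⁻ x, ({y | ENNReal.ofReal (t/3) < 6 * D y}.indicator D) x := by ring
      _ = 24 * ∫⁻ x, ({y | ENNReal.ofReal (t/3) < 6 * D y}.indicator D) x := by
          congr 1
          have h1 : ENNReal.ofReal (t/3) / 2 = ENNReal.ofReal (t/6) := by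
            rw [show (2:ℝ≥0∞) = ENNReal.ofReal 2 by norm_num,
              ← ENNReal.ofReal_div_of_pos (by norm_num)]
            congr 1
            ring
          have h2 : (ENNReal.ofReal (t/6))⁻¹ * ENNReal.ofReal t = 6 := by
            rw [← ENNReal.div_eq_inv_mul,
              ← ENNReal.ofReal_div_of_pos (by positivity : (0:ℝ) < t/6),
              show t / (t/6) = 6 by field_simp]
            norm_num
          rw [h1, h2]
          norm_num
  -- inner function for the double integral
  set Fn : ℝ → ℝ → ℝ≥0∞ :=
    fun t x => ({y | ENNReal.ofReal (t/3) < 6 * D y}.indicator D) x with hFn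
  have hFm : Measurable (Function.uncurry Fn) := by
    have hA : MeasurableSet {z : ℝ × ℝ | ENNReal.ofReal (z.1/3) < 6 * D z.2} :=
      measurableSet_lt ((measurable_fst.div_const 3).ennreal_ofReal)
        (measurable_const.mul (hDm.comp measurable_snd))
    have heq : Function.uncurry Fn
        = Set.indicator {z : ℝ × ℝ | ENNReal.ofReal (z.1/3) < 6 * D z.2}
          (fun z => D z.2) := by
      ext z
      simp [Function.uncurry, hFn, Set.indicator_apply]
    rw [heq]
    exact (hDm.comp measurable_snd).indicator hA
  have hinner : ∀ x, (∫⁻ t in Set.Ioi (0:ℝ), Fn t x)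
      = 18 * ENNReal.ofReal (deriv f x ^ 2) := by
    intro x
    have hSm : MeasurableSet {t : ℝ | ENNReal.ofReal (t/3) < 6 * D x} :=
      measurableSet_lt ((measurable_id.div_const 3).ennreal_ofReal) measurable_const
    have hfni : ∀ t : ℝ, Fn t x
        = ({t' : ℝ | ENNReal.ofReal (t'/3) < 6 * D x}).indicator (fun _ => D x) t := by
      intro t
      simp [hFn, Set.indicator_apply]
    calc (∫⁻ t in Set.Ioi (0:ℝ), Fn t x)
        = ∫⁻ t in Set.Ioi (0:ℝ),
            ({t' : ℝ | ENNReal.ofReal (t'/3) < 6 * D x}).indicator (fun _ => D x) t := by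
          exact lintegral_congr fun t => hfni t
      _ = ∫⁻ t in {t' : ℝ | ENNReal.ofReal (t'/3) < 6 * D x} ∩ Set.Ioi (0:ℝ), D x := by
          rw [lintegral_indicator hSm, Measure.restrict_restrict hSm]
      _ = D x * volume ({t' : ℝ | ENNReal.ofReal (t'/3) < 6 * D x} ∩ Set.Ioi (0:ℝ)) := by
          rw [setLIntegral_const]
      _ = 18 * ENNReal.ofReal (deriv f x ^ 2) := by
          have hset : {t' : ℝ | ENNReal.ofReal (t'/3) < 6 * D x} ∩ Set.Ioi (0:ℝ)
              = Set.Ioo 0 (3 * (6 * D x).toReal) := by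
            ext t
            simp only [Set.mem_inter_iff, Set.mem_setOf_eq, Set.mem_Ioi, Set.mem_Ioo]
            constructor
            · rintro ⟨hlt, ht0⟩
              refine ⟨ht0, ?_⟩
              rw [ENNReal.ofReal_lt_iff_lt_toReal (by positivity) (hDtop x)] at hlt
              linarith
            · rintro ⟨ht0, hlt⟩
              refine ⟨?_, ht0⟩
              rw [ENNReal.ofReal_lt_iff_lt_toReal (by positivity) (hDtop x)]
              linarith
          rw [hset, Real.volume_Ioo, sub_zero,
            ENNReal.ofReal_mul (by norm_num : (0:ℝ) ≤ 3),
            ENNReal.ofReal_toReal (hDtop x)]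
          have : D x * (ENNReal.ofReal 3 * (6 * D x)) = 18 * (D x * D x) := by
            rw [show ENNReal.ofReal 3 = (3:ℝ≥0∞) by norm_num]
            ring
          rw [this, hD]
          rw [← ENNReal.ofReal_mul (abs_nonneg _), abs_mul_abs_self, ← sq]
  -- assembling everything
  have hp2 : ∀ p : ℝ, Mr p ^ (2:ℝ) = Mr p ^ (2:ℕ) := by
    intro p
    rw [show ((2:ℝ)) = ((2:ℕ):ℝ) by norm_num, Real.rpow_natCast]
  calc (∫⁻ p, ENNReal.ofReal (maxFnN f p ^ 2))
      ≤ ∫⁻ p, ENNReal.ofReal (Mr p ^ 2) := lintegral_mono hpt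
    _ = ENNReal.ofReal 2 * ∫⁻ t in Set.Ioi (0:ℝ),
          volume {a | t < Mr a} * ENNReal.ofReal (t ^ ((2:ℝ) - 1)) := by
        rw [← hlc]
        apply lintegral_congr
        intro p
        rw [hp2 p]
    _ = ENNReal.ofReal 2 * ∫⁻ t in Set.Ioi (0:ℝ),
          volume {a | t < Mr a} * ENNReal.ofReal t := by
        congr 1
        apply lintegral_congr
        intro t
        norm_num
    _ ≤ ENNReal.ofReal 2 * ∫⁻ t in Set.Ioi (0:ℝ), 24 * ∫⁻ x, Fn t x := by
        apply mul_le_mul_right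
        apply setLIntegral_mono' measurableSet_Ioi
        intro t ht
        exact hbound t ht
    _ = ENNReal.ofReal 2 * (24 * ∫⁻ t in Set.Ioi (0:ℝ), ∫⁻ x, Fn t x) := by
        rw [lintegral_const_mul' _ _ (by norm_num : (24:ℝ≥0∞) ≠ ∞)]
    _ = ENNReal.ofReal 2 * (24 * ∫⁻ x, ∫⁻ t in Set.Ioi (0:ℝ), Fn t x) := by
        rw [lintegral_lintegral_swap hFm.aemeasurable]
    _ = ENNReal.ofReal 2 * (24 * ∫⁻ x, 18 * ENNReal.ofReal (deriv f x ^ 2)) := by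
        rw [lintegral_congr hinner]
    _ = ENNReal.ofReal 2 * (24 * (18 * ∫⁻ x, ENNReal.ofReal (deriv f x ^ 2))) := by
        rw [lintegral_const_mul' _ _ (by norm_num : (18:ℝ≥0∞) ≠ ∞)]
    _ = ENNReal.ofReal 864 * ∫⁻ p, ENNReal.ofReal (deriv f p ^ 2) := by
        rw [show ENNReal.ofReal 2 = (2:ℝ≥0∞) by norm_num,
          show ENNReal.ofReal 864 = (864:ℝ≥0∞) by norm_num]
        ring
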